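/- arXiv:1801.00466 — 4 statements merged into one kernel-verified Lean document; each statement's English description precedes it below -/
import Mathlib

section
/- With s_n defined by s_0 = 0, s_1 = 1, s_n = 4s_{n−1} + 4s_{n−2}, and p_n the Pell numbers, the ratio s_n/p_n² tends to 0 as n → ∞. -/
def pell : ℕ → ℕ
  | 0 => 0
  | 1 => 1
  | n + 2 => 2 * pell (n + 1) + pell n

def s : ℕ → ℕ
  | 0 => 0
  | 1 => 1
  | n + 2 => 4 * s (n + 1) + 4 * s n

lemma s_le : ∀ n, s n ≤ 5 ^ n
  | 0 => by simp [s]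
  | 1 => by simp [s]
  | (n + 2) => by
    have h1 := s_le (n + 1)
    have h2 := s_le n
    have e1 : 5 ^ (n + 2) = 25 * 5 ^ n := by ring
    have e2 : 5 ^ (n + 1) = 5 * 5 ^ n := by ring
    show 4 * s (n + 1) + 4 * s n ≤ 5 ^ (n + 2)
    omega

lemma pell_ge : ∀ n, ((12 : ℝ) / 5) ^ (n + 1) ≤ 3 * pell (n + 1)
  | 0 => by norm_num [pell]
  | 1 => by norm_num [pell, pell.eq_3]
  | (n + 2) => by
    have h1 := pell_ge (n + 1)
    have h2 := pell_ge n
    have e : pell (n + 3) = 2 * pell (n + 2) + pell (n + 1) := rfl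
    show ((12 : ℝ) / 5) ^ (n + 3) ≤ 3 * pell (n + 3)
    rw [e]
    push_cast
    have e1 : ((12 : ℝ) / 5) ^ (n + 3) = (144 / 25) * (12 / 5) ^ (n + 1) := by ring
    have e2 : ((12 : ℝ) / 5) ^ (n + 2) = (12 / 5) * (12 / 5) ^ (n + 1) := by ring
    have := pow_nonneg (by norm_num : (0:ℝ) ≤ 12 / 5) (n + 1)
    have h1' : ((12 : ℝ) / 5) ^ (n + 2) ≤ 3 * pell (n + 2) := h1
    nlinarith

lemma ratio_le (n : ℕ) : (s n : ℝ) / (pell n : ℝ) ^ 2 ≤ 9 * ((125 : ℝ) / 144) ^ n := by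
  match n with
  | 0 => norm_num [s, pell]
  | (m + 1) =>
    set n := m + 1
    have hp : ((12 : ℝ) / 5) ^ n ≤ 3 * pell n := pell_ge m
    have hpow : (0 : ℝ) < ((12 : ℝ) / 5) ^ n := by positivity
    have hppos : (0 : ℝ) < (pell n : ℝ) := by nlinarith
    have hs : (s n : ℝ) ≤ 5 ^ n := by
      have := s_le n
      calc (s n : ℝ) ≤ ((5 ^ n : ℕ) : ℝ) := by exact_mod_cast this
        _ = 5 ^ n := by push_cast; ring
    rw [div_le_iff₀ (by positivity)]
    have hsq : ((12 : ℝ) / 5) ^ n * ((12 : ℝ) / 5) ^ n ≤ 9 * (pell n : ℝ) ^ 2 := by nlinarith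
    have key : ((125 : ℝ) / 144) ^ n * (((12 : ℝ) / 5) ^ n * ((12 : ℝ) / 5) ^ n) = 5 ^ n := by
      rw [← mul_pow, ← mul_pow]; norm_num
    have hqpos : (0 : ℝ) < ((125 : ℝ) / 144) ^ n := by positivity
    nlinarith [mul_le_mul_of_nonneg_left hsq (le_of_lt hqpos)]

theorem area_fraction_tendsto_zero :
    Filter.Tendsto (fun n => (s n : ℝ) / (pell n : ℝ) ^ 2) Filter.atTop (nhds 0) := by
  have hg : Filter.Tendsto (fun n => 9 * ((125 : ℝ) / 144) ^ n) Filter.atTop (nhds 0) := by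
    have := (tendsto_pow_atTop_nhds_zero_of_lt_one (by norm_num : (0:ℝ) ≤ 125 / 144)
      (by norm_num : (125 : ℝ) / 144 < 1)).const_mul (9 : ℝ)
    simpa using this
  exact squeeze_zero (fun n => by positivity) ratio_le hg
end

section
/- With s_n defined by s_0 = 0, s_1 = 1, s_n = 4s_{n−1} + 4s_{n−2}, the limit of (log s_n)/(log p_n) as n → ∞ equals 1 + log 2 / log(1+√2). -/
lemma pell_rec (n : ℕ) : pell (n + 2) = 2 * pell (n + 1) + pell n := rfl
lemma s_rec (n : ℕ) : s (n + 2) = 4 * s (n + 1) + 4 * s n := rfl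

lemma s_eq_aux : ∀ n, s (n+1) = 2^n * pell (n+1) ∧ s (n+2) = 2^(n+1) * pell (n+2) := by
  intro n
  induction n with
  | zero => refine ⟨by simp [s, pell], ?_⟩; rw [s_rec, pell_rec]; simp [s, pell]
  | succ k ih =>
    obtain ⟨h1, h2⟩ := ih
    refine ⟨h2, ?_⟩
    rw [s_rec, pell_rec, h1, h2]
    ring

lemma s_eq (n : ℕ) (hn : 1 ≤ n) : s n = 2^(n-1) * pell n := by
  obtain ⟨m, rfl⟩ := Nat.exists_eq_add_of_le' hn
  simpa using (s_eq_aux m).1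

lemma pell_ge_aux : ∀ n, n ≤ pell n ∧ n + 1 ≤ pell (n+1) := by
  intro n
  induction n with
  | zero => simp [pell]
  | succ k ih =>
    obtain ⟨h1, h2⟩ := ih
    refine ⟨h2, ?_⟩
    rw [pell_rec]
    omega

lemma pell_ge_s9 (n : ℕ) : n ≤ pell n := (pell_ge_aux n).1

noncomputable def aJ : ℝ := 1 + Real.sqrt 2

lemma sqrt2_sq : Real.sqrt 2 ^ 2 = 2 := Real.sq_sqrt (by norm_num)

lemma aJ_sq : aJ ^ 2 = 2 * aJ + 1 := by
  have := sqrt2_sq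
  simp only [aJ]
  nlinarith [Real.sqrt_nonneg 2]

lemma one_lt_aJ : 1 < aJ := by
  have : 0 < Real.sqrt 2 := Real.sqrt_pos.mpr (by norm_num)
  simp only [aJ]; linarith

lemma aJ_pos : 0 < aJ := lt_trans one_pos one_lt_aJ

lemma pow_rec (n : ℕ) : aJ ^ (n + 2) = 2 * aJ ^ (n + 1) + aJ ^ n := by
  have h : aJ ^ (n + 2) = aJ ^ n * aJ ^ 2 := by ring
  rw [h, aJ_sq]; ring

lemma pell_two : (pell 2 : ℝ) = 2 := by norm_num [pell_rec, pell]

lemma pell_upper_aux : ∀ n, (pell (n+1) : ℝ) ≤ aJ^(n+1) ∧ (pell (n+2) : ℝ) ≤ aJ^(n+2) := by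
  intro n
  induction n with
  | zero =>
    constructor
    · simpa [pell, aJ] using Real.sqrt_nonneg 2
    · show ((pell 2 : ℕ) : ℝ) ≤ aJ ^ 2
      rw [pell_two, aJ_sq]
      nlinarith [one_lt_aJ]
  | succ k ih =>
    obtain ⟨h1, h2⟩ := ih
    refine ⟨h2, ?_⟩
    have hc : ((pell (k+3) : ℕ) : ℝ) = 2 * (pell (k+2) : ℝ) + (pell (k+1) : ℝ) := by
      rw [pell_rec]; push_cast; ring
    rw [hc, show k + 3 = (k+1) + 2 from rfl, pow_rec]
    linarith

lemma pell_upper (n : ℕ) (hn : 1 ≤ n) : (pell n : ℝ) ≤ aJ ^ n := by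
  obtain ⟨m, rfl⟩ := Nat.exists_eq_add_of_le' hn
  simpa using (pell_upper_aux m).1

lemma pell_lower_aux : ∀ n, aJ^(n+1) ≤ 3 * (pell (n+1) : ℝ) ∧ aJ^(n+2) ≤ 3 * (pell (n+2) : ℝ) := by
  intro n
  induction n with
  | zero =>
    have hs : Real.sqrt 2 ≤ 2 := by nlinarith [sqrt2_sq, Real.sqrt_nonneg 2]
    constructor
    · show aJ ^ (0 + 1) ≤ 3 * ((pell 1 : ℕ) : ℝ)
      simp only [zero_add, pow_one, pell, Nat.cast_one, mul_one, aJ]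
      linarith
    · show aJ ^ 2 ≤ 3 * ((pell 2 : ℕ) : ℝ)
      rw [pell_two, aJ_sq]
      simp only [aJ]
      nlinarith [sqrt2_sq, Real.sqrt_nonneg 2]
  | succ k ih =>
    obtain ⟨h1, h2⟩ := ih
    refine ⟨h2, ?_⟩
    have hc : ((pell (k+3) : ℕ) : ℝ) = 2 * (pell (k+2) : ℝ) + (pell (k+1) : ℝ) := by
      rw [pell_rec]; push_cast; ring
    rw [hc, show k + 3 = (k+1) + 2 from rfl, pow_rec]
    linarith

lemma pell_lower (n : ℕ) (hn : 1 ≤ n) : aJ ^ n ≤ 3 * (pell n : ℝ) := by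
  obtain ⟨m, rfl⟩ := Nat.exists_eq_add_of_le' hn
  simpa using (pell_lower_aux m).1

open Filter Real

lemma pell_cast_pos (n : ℕ) (hn : 1 ≤ n) : (0 : ℝ) < (pell n : ℝ) := by
  have : 1 ≤ pell n := le_trans hn (pell_ge_s9 n)
  exact_mod_cast Nat.lt_of_lt_of_le Nat.zero_lt_one this

lemma log_pell_div_tendsto :
    Tendsto (fun n : ℕ => Real.log (pell n) / n) atTop (nhds (Real.log aJ)) := by
  apply tendsto_of_tendsto_of_tendsto_of_le_of_le'
    (g := fun n : ℕ => Real.log aJ - Real.log 3 / n) (h := fun _ : ℕ => Real.log aJ)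
  · have h3 : Tendsto (fun n : ℕ => Real.log 3 / n) atTop (nhds 0) :=
      tendsto_const_div_atTop_nhds_zero_nat _
    simpa using tendsto_const_nhds.sub h3
  · exact tendsto_const_nhds
  · filter_upwards [eventually_ge_atTop 1] with n hn
    have hp : (0 : ℝ) < (pell n : ℝ) := pell_cast_pos n hn
    have hnp : (0 : ℝ) < (n : ℝ) := by exact_mod_cast hn
    have hkey : (n : ℝ) * Real.log aJ - Real.log 3 ≤ Real.log (pell n) := by
      have h1 : Real.log (aJ ^ n) ≤ Real.log (3 * (pell n : ℝ)) :=
        Real.log_le_log (pow_pos aJ_pos n) (pell_lower n hn)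
      rw [Real.log_pow, Real.log_mul (by norm_num) hp.ne'] at h1
      push_cast at h1 ⊢
      linarith
    have heq : Real.log aJ - Real.log 3 / n = ((n:ℝ) * Real.log aJ - Real.log 3) / n := by
      field_simp
    rw [heq]
    gcongr
  · filter_upwards [eventually_ge_atTop 1] with n hn
    have hp : (0 : ℝ) < (pell n : ℝ) := pell_cast_pos n hn
    have hnp : (0 : ℝ) < (n : ℝ) := by exact_mod_cast hn
    have h1 : Real.log (pell n) ≤ (n : ℝ) * Real.log aJ := by
      have := Real.log_le_log hp (pell_upper n hn)
      rwa [Real.log_pow] at this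
    rw [div_le_iff₀ hnp]
    linarith

lemma log_pell_atTop : Tendsto (fun n : ℕ => Real.log (pell n)) atTop atTop := by
  have h1 : Tendsto (fun n : ℕ => pell n) atTop atTop :=
    tendsto_atTop_mono pell_ge_s9 tendsto_id
  have h2 : Tendsto (fun n : ℕ => ((pell n : ℕ) : ℝ)) atTop atTop :=
    tendsto_natCast_atTop_atTop.comp h1
  exact Real.tendsto_log_atTop.comp h2

theorem box_dimension :
    Filter.Tendsto (fun n => Real.log (s n) / Real.log (pell n)) Filter.atTop
      (nhds (1 + Real.log 2 / Real.log (1 + Real.sqrt 2))) := by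
  have hL : 0 < Real.log aJ := Real.log_pos one_lt_aJ
  -- n / log pell n → (log aJ)⁻¹
  have hB : Tendsto (fun n : ℕ => (n : ℝ) / Real.log (pell n)) atTop (nhds (Real.log aJ)⁻¹) := by
    have := (log_pell_div_tendsto.inv₀ hL.ne')
    simpa [inv_div] using this
  have hinv0 : Tendsto (fun n : ℕ => (Real.log (pell n))⁻¹) atTop (nhds 0) :=
    tendsto_inv_atTop_zero.comp log_pell_atTop
  have hC : Tendsto (fun n : ℕ => 1 + Real.log 2 * ((n : ℝ) / Real.log (pell n)
      - (Real.log (pell n))⁻¹)) atTop (nhds (1 + Real.log 2 * ((Real.log aJ)⁻¹ - 0))) :=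
    tendsto_const_nhds.add (((hB.sub hinv0)).const_mul _)
  have hgoal : (1 : ℝ) + Real.log 2 * ((Real.log aJ)⁻¹ - 0)
      = 1 + Real.log 2 / Real.log (1 + Real.sqrt 2) := by
    rw [sub_zero, ← div_eq_mul_inv]; rfl
  rw [hgoal] at hC
  refine hC.congr' ?_
  filter_upwards [eventually_ge_atTop 2] with n hn
  have hn1 : 1 ≤ n := by omega
  have hp : (0 : ℝ) < (pell n : ℝ) := pell_cast_pos n hn1
  have hp2 : (2 : ℝ) ≤ (pell n : ℝ) := by
    have : 2 ≤ pell n := le_trans hn (pell_ge_s9 n)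
    exact_mod_cast this
  have hlogp : 0 < Real.log (pell n) := Real.log_pos (by linarith)
  have hs : Real.log (s n) = ((n : ℝ) - 1) * Real.log 2 + Real.log (pell n) := by
    rw [s_eq n hn1]
    push_cast
    rw [Real.log_mul (by positivity) hp.ne', Real.log_pow]
    have : ((n - 1 : ℕ) : ℝ) = (n : ℝ) - 1 := by
      have := Nat.cast_sub hn1 (R := ℝ); simpa using this
    rw [this]
  rw [hs]
  field_simp
  ring
end

section
/- With c_n defined by c_0 = 0, c_1 = 1, c_n = 8c_{n−1} + 12c_{n−2}, and p_n the Pell numbers, the ratio c_n/p_n³ tends to 0 as n → ∞. -/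
def c : ℕ → ℕ
  | 0 => 0
  | 1 => 1
  | n + 2 => 8 * c (n + 1) + 12 * c n

lemma c_bound : ∀ n, 10 ^ n * c n ≤ 93 ^ n
  | 0 => by simp [c]
  | 1 => by norm_num [c]
  | n + 2 => by
    have h1 := c_bound (n + 1)
    have h2 := c_bound n
    simp only [pow_succ] at h1 h2 ⊢
    simp only [c]
    zify at h1 h2 ⊢
    nlinarith [h1, h2, pow_pos (by norm_num : (0:ℤ) < 93) n]

lemma pell_bound : ∀ n, 2 * 12 ^ n ≤ 5 ^ n * pell (n + 2)
  | 0 => by norm_num [pell]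
  | 1 => by norm_num [pell]
  | n + 2 => by
    have h1 := pell_bound (n + 1)
    have h2 := pell_bound n
    simp only [pow_succ] at h1 h2 ⊢
    simp only [pell] at h1 h2 ⊢
    zify at h1 h2 ⊢
    nlinarith [h1, h2, pow_pos (by norm_num : (0:ℤ) < 12) n]

lemma c_bound_real (n : ℕ) : (c n : ℝ) ≤ (93 / 10) ^ n := by
  have h := c_bound n
  have h' : ((10 : ℝ)) ^ n * (c n : ℝ) ≤ (93 : ℝ) ^ n := by exact_mod_cast h
  rw [div_pow]
  rw [le_div_iff₀ (by positivity)]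
  linarith [h']

lemma pell_bound_real (n : ℕ) : 2 * ((12 : ℝ) / 5) ^ n ≤ (pell (n + 2) : ℝ) := by
  have h := pell_bound n
  have h' : (2 : ℝ) * (12 : ℝ) ^ n ≤ (5 : ℝ) ^ n * (pell (n + 2) : ℝ) := by exact_mod_cast h
  rw [div_pow, ← mul_div_assoc, div_le_iff₀ (by positivity)]
  linarith [h']

theorem volume_fraction_tendsto_zero :
    Filter.Tendsto (fun n => (c n : ℝ) / (pell n : ℝ) ^ 3) Filter.atTop (nhds 0) := by
  rw [← Filter.tendsto_add_atTop_iff_nat 2]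
  have hg : Filter.Tendsto (fun n : ℕ => (8649 / 800 : ℝ) * (775 / 1152) ^ n)
      Filter.atTop (nhds 0) := by
    have := (tendsto_pow_atTop_nhds_zero_of_lt_one (by norm_num : (0:ℝ) ≤ 775/1152)
      (by norm_num : (775:ℝ)/1152 < 1)).const_mul (8649 / 800 : ℝ)
    simpa using this
  apply squeeze_zero (fun n => by positivity) _ hg
  intro n
  have hp := pell_bound_real n
  have hc := c_bound_real (n + 2)
  have hppos : (0 : ℝ) < 2 * ((12 : ℝ) / 5) ^ n := by positivity
  have hcube : (2 * ((12 : ℝ) / 5) ^ n) ^ 3 ≤ (pell (n + 2) : ℝ) ^ 3 :=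
    pow_le_pow_left₀ (le_of_lt hppos) hp 3
  have e1 : (2 * ((12 : ℝ) / 5) ^ n) ^ 3 = 8 * (((12 : ℝ) / 5) ^ 3) ^ n := by
    rw [mul_pow, ← pow_mul, mul_comm n 3, pow_mul]; norm_num
  have hne : ((((12 : ℝ) / 5) ^ 3) ^ n) ≠ 0 := by positivity
  calc (c (n + 2) : ℝ) / (pell (n + 2) : ℝ) ^ 3
      ≤ (93 / 10) ^ (n + 2) / (2 * ((12 : ℝ) / 5) ^ n) ^ 3 :=
        div_le_div₀ (by positivity) hc (by positivity) hcube
    _ = 8649 / 800 * (775 / 1152) ^ n := by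
        rw [e1, show ((775 : ℝ) / 1152) = (93 / 10) / (12 / 5) ^ 3 by norm_num,
          div_pow, pow_succ, pow_succ]
        field_simp
        simp only [mul_pow, pow_succ]
        ring_nf
        rw [← mul_pow, ← mul_pow]; norm_num
end

section
/- With c_n defined by c_0 = 0, c_1 = 1, c_n = 8c_{n−1} + 12c_{n−2}, the limit of (log c_n)/(log p_n) as n → ∞ equals log(4+2√7)/log(1+√2). -/
open Filter Real

lemma c_bounds : ∀ n : ℕ,
    ((c (n+1) : ℝ) ≤ (4 + 2 * Real.sqrt 7)^(n+1) ∧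
      (4 + 2 * Real.sqrt 7)^(n+1) ≤ (c (n+1) : ℝ) * (4 + 2 * Real.sqrt 7)^2) := by
  set a : ℝ := 4 + 2 * Real.sqrt 7 with ha
  have h7 : Real.sqrt 7 ^ 2 = 7 := Real.sq_sqrt (by norm_num)
  have h7n : (0:ℝ) ≤ Real.sqrt 7 := Real.sqrt_nonneg 7
  have ha1 : (1:ℝ) ≤ a := by nlinarith
  have ha2 : a^2 = 8*a + 12 := by nlinarith
  have key : ∀ n : ℕ,
      (((c (n+1) : ℝ) ≤ a^(n+1) ∧ a^(n+1) ≤ (c (n+1) : ℝ) * a^2) ∧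
       ((c (n+2) : ℝ) ≤ a^(n+2) ∧ a^(n+2) ≤ (c (n+2) : ℝ) * a^2)) := by
    intro n
    induction n with
    | zero =>
      have hc1 : c 1 = 1 := rfl
      have hc2 : c 2 = 8 := rfl
      rw [hc1, hc2]
      push_cast
      constructor
      · constructor
        · simpa using ha1
        · simp only [pow_one, one_mul]; nlinarith
      · constructor
        · nlinarith
        · nlinarith
    | succ m ih =>
      refine ⟨ih.2, ?_, ?_⟩
      · have hrec : (c (m+3) : ℝ) = 8 * (c (m+2) : ℝ) + 12 * (c (m+1) : ℝ) := by
          show ((8 * c (m + 2) + 12 * c (m+1) : ℕ) : ℝ) = _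
          push_cast; ring
        have harec : a^(m+3) = 8 * a^(m+2) + 12 * a^(m+1) := by
          have : a^(m+3) = a^(m+1) * a^2 := by ring
          rw [this, ha2]; ring
        rw [hrec, harec]
        have := ih.1.1
        have := ih.2.1
        nlinarith
      · have hrec : (c (m+3) : ℝ) = 8 * (c (m+2) : ℝ) + 12 * (c (m+1) : ℝ) := by
          show ((8 * c (m + 2) + 12 * c (m+1) : ℕ) : ℝ) = _
          push_cast; ring
        have harec : a^(m+3) = 8 * a^(m+2) + 12 * a^(m+1) := by
          have : a^(m+3) = a^(m+1) * a^2 := by ring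
          rw [this, ha2]; ring
        rw [hrec, harec]
        have := ih.1.2
        have := ih.2.2
        nlinarith
  exact fun n => (key n).1

lemma pell_bounds : ∀ n : ℕ,
    ((pell (n+1) : ℝ) ≤ (1 + Real.sqrt 2)^(n+1) ∧
      (1 + Real.sqrt 2)^(n+1) ≤ (pell (n+1) : ℝ) * (1 + Real.sqrt 2)^2) := by
  set a : ℝ := 1 + Real.sqrt 2 with ha
  have h2 : Real.sqrt 2 ^ 2 = 2 := Real.sq_sqrt (by norm_num)
  have h2n : (0:ℝ) ≤ Real.sqrt 2 := Real.sqrt_nonneg 2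
  have ha1 : (1:ℝ) ≤ a := by nlinarith
  have ha2 : a^2 = 2*a + 1 := by nlinarith
  have key : ∀ n : ℕ,
      (((pell (n+1) : ℝ) ≤ a^(n+1) ∧ a^(n+1) ≤ (pell (n+1) : ℝ) * a^2) ∧
       ((pell (n+2) : ℝ) ≤ a^(n+2) ∧ a^(n+2) ≤ (pell (n+2) : ℝ) * a^2)) := by
    intro n
    induction n with
    | zero =>
      have hp1 : pell 1 = 1 := rfl
      have hp2 : pell 2 = 2 := rfl
      rw [hp1, hp2]
      push_cast
      constructor
      · constructor
        · simpa using ha1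
        · simp only [pow_one, one_mul]; nlinarith
      · constructor
        · nlinarith
        · nlinarith
    | succ m ih =>
      refine ⟨ih.2, ?_, ?_⟩
      · have hrec : (pell (m+3) : ℝ) = 2 * (pell (m+2) : ℝ) + (pell (m+1) : ℝ) := by
          show ((2 * pell (m + 2) + pell (m+1) : ℕ) : ℝ) = _
          push_cast; ring
        have harec : a^(m+3) = 2 * a^(m+2) + a^(m+1) := by
          have : a^(m+3) = a^(m+1) * a^2 := by ring
          rw [this, ha2]; ring
        rw [hrec, harec]
        have := ih.1.1
        have := ih.2.1
        nlinarith
      · have hrec : (pell (m+3) : ℝ) = 2 * (pell (m+2) : ℝ) + (pell (m+1) : ℝ) := by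
          show ((2 * pell (m + 2) + pell (m+1) : ℕ) : ℝ) = _
          push_cast; ring
        have harec : a^(m+3) = 2 * a^(m+2) + a^(m+1) := by
          have : a^(m+3) = a^(m+1) * a^2 := by ring
          rw [this, ha2]; ring
        rw [hrec, harec]
        have := ih.1.2
        have := ih.2.2
        nlinarith
  exact fun n => (key n).1

lemma aux_tendsto (a : ℝ) (ha : 1 < a) (u : ℕ → ℕ)
    (hb : ∀ n : ℕ, (u (n+1) : ℝ) ≤ a^(n+1) ∧ a^(n+1) ≤ (u (n+1) : ℝ) * a^2) :
    Tendsto (fun n => Real.log (u n) / n) atTop (nhds (Real.log a)) := by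
  have ha0 : (0:ℝ) < a := lt_trans one_pos ha
  have hla : 0 < Real.log a := Real.log_pos ha
  have key : ∀ n : ℕ, 1 ≤ n →
      (1 - 2/(n:ℝ)) * Real.log a ≤ Real.log (u n) / n ∧
      Real.log (u n) / n ≤ Real.log a := by
    intro n hn
    obtain ⟨m, rfl⟩ := Nat.exists_eq_add_of_le hn
    set k := 1 + m with hk
    have hub := (hb m).1
    have hlb := (hb m).2
    have hkeq : m + 1 = k := by omega
    rw [hkeq] at hub hlb
    have hnpos : (0:ℝ) < (k:ℝ) := by positivity
    have hupos : (0:ℝ) < (u k : ℝ) := by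
      by_contra h
      push_neg at h
      have : a ^ k ≤ 0 := le_trans hlb (by nlinarith [sq_nonneg a])
      exact absurd this (not_le.2 (pow_pos ha0 k))
    have hupper : Real.log (u k) ≤ (k:ℝ) * Real.log a := by
      have := Real.log_le_log hupos hub
      rwa [Real.log_pow] at this
      -- log (a^k) = k * log a
    have hlower : (k:ℝ) * Real.log a - 2 * Real.log a ≤ Real.log (u k) := by
      have h1 : Real.log (a^k) ≤ Real.log ((u k : ℝ) * a^2) :=
        Real.log_le_log (pow_pos ha0 k) hlb
      rw [Real.log_pow, Real.log_mul (ne_of_gt hupos) (by positivity),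
        Real.log_pow] at h1
      push_cast at h1 ⊢
      linarith
    constructor
    · rw [le_div_iff₀ hnpos]
      have heq : (1 - 2/(k:ℝ)) * Real.log a * k = (k:ℝ) * Real.log a - 2 * Real.log a := by
        field_simp
      rw [heq]
      exact hlower
    · rw [div_le_iff₀ hnpos]
      linarith [hupper]
  have hlow : Tendsto (fun n : ℕ => (1 - 2/(n:ℝ)) * Real.log a) atTop
      (nhds (Real.log a)) := by
    have h0 : Tendsto (fun n : ℕ => 2/(n:ℝ)) atTop (nhds 0) :=
      tendsto_const_nhds.div_atTop tendsto_natCast_atTop_atTop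
    have := ((tendsto_const_nhds (x := (1:ℝ))).sub h0).mul_const (Real.log a)
    simpa using this
  refine tendsto_of_tendsto_of_tendsto_of_le_of_le' hlow tendsto_const_nhds ?_ ?_
  · exact Filter.eventually_atTop.2 ⟨1, fun n hn => (key n hn).1⟩
  · exact Filter.eventually_atTop.2 ⟨1, fun n hn => (key n hn).2⟩

theorem cube_box_dimension :
    Filter.Tendsto (fun n => Real.log (c n) / Real.log (pell n)) Filter.atTop
      (nhds (Real.log (4 + 2 * Real.sqrt 7) / Real.log (1 + Real.sqrt 2))) := by
  have h7 : (0:ℝ) ≤ Real.sqrt 7 := Real.sqrt_nonneg 7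
  have hA : (1:ℝ) < 4 + 2 * Real.sqrt 7 := by nlinarith
  have hS : (1:ℝ) < 1 + Real.sqrt 2 := by
    have : (0:ℝ) < Real.sqrt 2 := Real.sqrt_pos.2 (by norm_num)
    linarith
  have hc := aux_tendsto _ hA c c_bounds
  have hp := aux_tendsto _ hS pell pell_bounds
  have hne : Real.log (1 + Real.sqrt 2) ≠ 0 := ne_of_gt (Real.log_pos hS)
  have hdiv := hc.div hp hne
  refine hdiv.congr' ?_
  refine Filter.eventually_atTop.2 ⟨1, fun n hn => ?_⟩
  have hn0 : (n:ℝ) ≠ 0 := Nat.cast_ne_zero.2 (by omega)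
  simp only [Pi.div_apply]
  rw [div_div_div_comm, div_self hn0, div_one]
end
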